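/- There are no integers x, y, z, w with x + y + z + w = 1 such that (12x − 8y − 8z − 4w + 9)/35 and (−6(12x − 8y − 8z − 4w) + 16)/35 are both non-negative integers. -/
import Mathlib


theorem stmt14 : ¬ ∃ x y z w : ℤ, x + y + z + w = 1 ∧ ((35:ℤ) ∣ (12*x - 8*y - 8*z - 4*w + 9) ∧ 0 ≤ (12*x - 8*y - 8*z - 4*w + 9)) ∧ ((35:ℤ) ∣ (-6*(12*x - 8*y - 8*z - 4*w) + 16) ∧ 0 ≤ (-6*(12*x - 8*y - 8*z - 4*w) + 16)) := by push_neg; intro x y z w h1 h2; omega
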